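/- Let L ⊂ ℝ² be a centrally symmetric convex body equipartitioned by the standard basis (±e₁, ±e₂ ∈ ∂L, each quadrant has area |L|/4). If a = (a₁, a₂) ∈ L with a₁, a₂ ≥ 0, then |a₁ − a₂| ≤ 1. -/

import Mathlib

open MeasureTheory
open scoped RealInnerProductSpace

/-- If a planar symmetric convex body `L` is equipartitioned by the standard basis, then every
point `a ∈ L` in the positive quadrant satisfies `|a₁ - a₂| ≤ 1`. -/
theorem equipartitioned_planar_coord_bound (L : Set (EuclideanSpace ℝ (Fin 2)))
    (hLcomp : IsCompact L) (hLconv : Convex ℝ L) (hLsymm : L = -L)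
    (hLint : (interior L).Nonempty)
    (he : ∀ i : Fin 2, EuclideanSpace.single i (1 : ℝ) ∈ frontier L)
    (hquad : ∀ σ : Fin 2 → Bool,
      volume (L ∩ {x | ∀ i, 0 ≤ (if σ i then (1 : ℝ) else -1) * x i}) = volume L / 4)
    (a : EuclideanSpace ℝ (Fin 2)) (ha : a ∈ L) (ha0 : 0 ≤ a 0) (ha1 : 0 ≤ a 1) :
    |a 0 - a 1| ≤ 1 := by
  have hLclosed : IsClosed L := hLcomp.isClosed
  have hneg : ∀ x, x ∈ L → -x ∈ L := by
    intro x hx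
    rw [hLsymm] at hx
    exact Set.mem_neg.mp hx
  -- 0 is an interior point
  obtain ⟨z, hz⟩ := hLint
  have h0 : (0 : EuclideanSpace ℝ (Fin 2)) ∈ interior L := by
    have := hLconv.combo_interior_self_mem_interior hz (hneg z (interior_subset hz))
      (by norm_num : (0:ℝ) < 1/2) (by norm_num : (0:ℝ) ≤ 1/2) (by norm_num)
    simpa [smul_neg] using this
  -- the basis vectors are not interior points, but are in L
  have hnotint : ∀ i : Fin 2, EuclideanSpace.single i (1 : ℝ) ∉ interior L := by
    intro i hi
    have := he i
    rw [hLclosed.frontier_eq] at this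
    exact this.2 hi
  have hmem : ∀ i : Fin 2, EuclideanSpace.single i (1 : ℝ) ∈ L :=
    fun i => hLclosed.frontier_subset (he i)
  -- key step: if `w ∈ L`, `0 < c < 1`, then `c • w ∈ interior L`
  have key : ∀ w ∈ L, ∀ c : ℝ, 0 < c → c < 1 → c • w ∈ interior L := by
    intro w hw c hc0 hc1
    have := hLconv.combo_interior_self_mem_interior h0 hw
      (by linarith : (0:ℝ) < 1 - c) hc0.le (by ring)
    simpa using this
  by_contra hab
  push_neg at hab
  rcases lt_abs.mp hab with h | h
  · -- a 0 > 1 + a 1 : the point (a0/(1+a1), 0) is in L and e₀ is strictly inside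
    set t : ℝ := 1 / (1 + a 1) with ht
    have h1a : (0:ℝ) < 1 + a 1 := by linarith
    have ht0 : 0 < t := by positivity
    have ht1 : t ≤ 1 := by
      rw [ht, div_le_one h1a]; linarith
    set w := t • a + (1 - t) • (-(EuclideanSpace.single (1 : Fin 2) (1:ℝ))) with hwdef
    have hw : w ∈ L :=
      hLconv ha (hneg _ (hmem 1)) ht0.le (by linarith) (by ring)
    have hw0 : w 0 = t * a 0 := by
      simp [hwdef, EuclideanSpace.single_apply]
    have hw1 : w 1 = 0 := by
      have : t * (1 + a 1) = 1 := by
        rw [ht]; field_simp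
      simp only [hwdef, PiLp.add_apply, PiLp.smul_apply, PiLp.neg_apply,
        EuclideanSpace.single_apply, smul_eq_mul]
      norm_num
      nlinarith
    have hw0gt : 1 < w 0 := by
      rw [hw0, ht]
      rw [div_mul_eq_mul_div, one_mul, lt_div_iff₀ h1a]
      linarith
    set c : ℝ := 1 / w 0 with hc
    have hc0 : 0 < c := by positivity
    have hc1 : c < 1 := by
      rw [hc, div_lt_one (by linarith)]; exact hw0gt
    have hcw : EuclideanSpace.single (0 : Fin 2) (1:ℝ) = c • w := by
      ext i
      fin_cases i
      · show EuclideanSpace.single (0 : Fin 2) (1:ℝ) 0 = (c • w) 0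
        rw [PiLp.smul_apply, hw0, EuclideanSpace.single_apply, if_pos rfl, smul_eq_mul, hc, hw0]
        exact (one_div_mul_cancel (show t * a 0 ≠ 0 by rw [← hw0]; exact ne_of_gt (zero_lt_one.trans hw0gt))).symm
      · show EuclideanSpace.single (0 : Fin 2) (1:ℝ) 1 = (c • w) 1
        rw [PiLp.smul_apply, hw1, EuclideanSpace.single_apply, smul_eq_mul]
        norm_num
    exact hnotint 0 (hcw ▸ key w hw c hc0 hc1)
  · -- a 1 > 1 + a 0 : symmetric case
    set t : ℝ := 1 / (1 + a 0) with ht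
    have h1a : (0:ℝ) < 1 + a 0 := by linarith
    have ht0 : 0 < t := by positivity
    have ht1 : t ≤ 1 := by
      rw [ht, div_le_one h1a]; linarith
    set w := t • a + (1 - t) • (-(EuclideanSpace.single (0 : Fin 2) (1:ℝ))) with hwdef
    have hw : w ∈ L :=
      hLconv ha (hneg _ (hmem 0)) ht0.le (by linarith) (by ring)
    have hw1 : w 1 = t * a 1 := by
      simp [hwdef, EuclideanSpace.single_apply]
    have hw0 : w 0 = 0 := by
      have : t * (1 + a 0) = 1 := by
        rw [ht]; field_simp
      simp only [hwdef, PiLp.add_apply, PiLp.smul_apply, PiLp.neg_apply,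
        EuclideanSpace.single_apply, smul_eq_mul]
      norm_num
      nlinarith
    have hw1gt : 1 < w 1 := by
      rw [hw1, ht]
      rw [div_mul_eq_mul_div, one_mul, lt_div_iff₀ h1a]
      linarith
    set c : ℝ := 1 / w 1 with hc
    have hc0 : 0 < c := by positivity
    have hc1 : c < 1 := by
      rw [hc, div_lt_one (by linarith)]; exact hw1gt
    have hcw : EuclideanSpace.single (1 : Fin 2) (1:ℝ) = c • w := by
      ext i
      fin_cases i
      · show EuclideanSpace.single (1 : Fin 2) (1:ℝ) 0 = (c • w) 0
        rw [PiLp.smul_apply, hw0, EuclideanSpace.single_apply, smul_eq_mul]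
        norm_num
      · show EuclideanSpace.single (1 : Fin 2) (1:ℝ) 1 = (c • w) 1
        rw [PiLp.smul_apply, hw1, EuclideanSpace.single_apply, if_pos rfl, smul_eq_mul, hc, hw1]
        exact (one_div_mul_cancel (show t * a 1 ≠ 0 by rw [← hw1]; exact ne_of_gt (zero_lt_one.trans hw1gt))).symm
    exact hnotint 1 (hcw ▸ key w hw c hc0 hc1)
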